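/- arXiv:1809.08690 — 2 statements merged into one kernel-verified Lean document; each statement's English description precedes it below -/
import Mathlib

section
/- Let α, β, γ be positive irrational numbers with α + β + γ = 1 and α, β < 1/2. With B̃_β = {b(n) - [b(n) ∈ B_α] : n ≥ 1}, B̃_γ = ℕ \ (B_α ∪ B̃_β), and E_γ(m) = B̃_γ(m) - B_γ(m), one has E_γ(m) = 1 if u_m + v_m > 1 and (u_m < 1-α or v_m < 1-β), and E_γ(m) = 0 otherwise, where u_m = {(m+1)α}, v_m = {(m+1)β}. -/
open scoped Classical

def beatty (α : ℝ) : Set ℤ := {m | ∃ n : ℕ, 0 < n ∧ m = ⌊(n : ℝ) / α⌋}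

noncomputable def countLe (S : Set ℤ) (m : ℤ) : ℕ :=
  ((Finset.Icc 1 m).filter (fun k => k ∈ S)).card

noncomputable def btil (α β : ℝ) (n : ℕ) : ℤ :=
  if ⌊(n : ℝ) / β⌋ ∈ beatty α then ⌊(n : ℝ) / β⌋ - 1 else ⌊(n : ℝ) / β⌋

/-- gap lemma -/
lemma gap_ge {θ : ℝ} (h0 : 0 < θ) {a b : ℕ} (hab : a < b) (c : ℤ) (hc : (c : ℝ) * θ ≤ 1) :
    ⌊(a : ℝ) / θ⌋ + c ≤ ⌊(b : ℝ) / θ⌋ := by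
  apply Int.le_floor.2
  have h1 : (⌊(a : ℝ) / θ⌋ : ℝ) ≤ (a : ℝ) / θ := Int.floor_le _
  have h2 : (a : ℝ) + 1 ≤ b := by exact_mod_cast hab
  have h3 : (c : ℝ) ≤ 1 / θ := by rw [le_div_iff₀ h0]; linarith
  have h5 : ((a : ℝ) + 1) / θ ≤ (b : ℝ) / θ := by gcongr
  have h6 : ((a : ℝ) + 1) / θ = (a : ℝ) / θ + 1 / θ := by ring
  push_cast
  nlinarith [h1, h3, h5, h6]

lemma fract_pos_of_irrational {x : ℝ} (h : Irrational x) : 0 < Int.fract x := by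
  rcases lt_or_eq_of_le (Int.fract_nonneg x) with h1 | h1
  · exact h1
  · exfalso
    apply h.ne_int ⌊x⌋
    have h2 := Int.fract_add_floor x
    linarith

lemma irr_mul_succ {θ : ℝ} (h : Irrational θ) (m : ℕ) : Irrational (((m : ℝ) + 1) * θ) := by
  have := h.intCast_mul (m := (m : ℤ) + 1) (by omega)
  have hc : (((m : ℤ) + 1 : ℤ) : ℝ) = (m : ℝ) + 1 := by push_cast; ring
  rwa [hc] at this

lemma count_beatty {θ : ℝ} (hirr : Irrational θ) (h0 : 0 < θ) (h1 : θ < 1) (m : ℕ) :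
    (countLe (beatty θ) (m : ℤ) : ℤ) = ⌊((m : ℝ) + 1) * θ⌋ := by
  have hmθ : Irrational (((m : ℝ) + 1) * θ) := irr_mul_succ hirr m
  set N : ℤ := ⌊((m : ℝ) + 1) * θ⌋ with hN
  have hN0 : 0 ≤ N := Int.floor_nonneg.2 (by positivity)
  have key : (Finset.Icc (1 : ℤ) (m : ℤ)).filter (fun k => k ∈ beatty θ)
      = (Finset.Icc 1 N.toNat).image (fun n : ℕ => ⌊(n : ℝ) / θ⌋) := by
    ext k
    simp only [Finset.mem_filter, Finset.mem_image, Finset.mem_Icc]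
    constructor
    · rintro ⟨⟨hk1, hkm⟩, n, hn, rfl⟩
      refine ⟨n, ⟨hn, ?_⟩, rfl⟩
      have h2 : (n : ℝ) / θ < (m : ℝ) + 1 := by
        calc (n : ℝ) / θ < ⌊(n : ℝ) / θ⌋ + 1 := Int.lt_floor_add_one _
        _ ≤ (m : ℝ) + 1 := by
            have : (⌊(n : ℝ) / θ⌋ : ℝ) ≤ (m : ℝ) := by exact_mod_cast hkm
            linarith
      have h3 : (n : ℝ) < ((m : ℝ) + 1) * θ := by
        rw [div_lt_iff₀ h0] at h2; linarith
      have h4 : (n : ℤ) ≤ N := Int.le_floor.2 (by exact_mod_cast h3.le)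
      omega
    · rintro ⟨n, ⟨hn1, hnN⟩, rfl⟩
      have h4 : (n : ℤ) ≤ N := by omega
      have h5 : (n : ℝ) ≤ ((m : ℝ) + 1) * θ := by exact_mod_cast Int.le_floor.1 h4
      have h6 : (n : ℝ) ≠ ((m : ℝ) + 1) * θ := fun h => hmθ.ne_int n (by exact_mod_cast h.symm)
      have h7 : (n : ℝ) < ((m : ℝ) + 1) * θ := lt_of_le_of_ne h5 h6
      have h8 : (n : ℝ) / θ < (m : ℝ) + 1 := by rw [div_lt_iff₀ h0]; linarith
      refine ⟨⟨?_, ?_⟩, ⟨n, hn1, rfl⟩⟩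
      · apply Int.le_floor.2
        rw [le_div_iff₀ h0]
        have : (1 : ℝ) ≤ n := by exact_mod_cast hn1
        push_cast
        linarith
      · have : ⌊(n : ℝ) / θ⌋ < (m : ℤ) + 1 := Int.floor_lt.2 (by exact_mod_cast h8)
        omega
  have hinj : Set.InjOn (fun n : ℕ => ⌊(n : ℝ) / θ⌋) ↑(Finset.Icc 1 N.toNat) := by
    intro a _ b _ hab
    by_contra hne
    rcases lt_or_gt_of_ne hne with h | h
    · have := gap_ge h0 h 1 (by push_cast; linarith)
      simp only at hab; omega
    · have := gap_ge h0 h 1 (by push_cast; linarith)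
      simp only at hab; omega
  rw [countLe, key, Finset.card_image_of_injOn hinj, Nat.card_Icc]
  omega

lemma mem_beatty_succ {θ : ℝ} (hirr : Irrational θ) (h0 : 0 < θ) (h1 : θ < 1) (m : ℕ) :
    ((m : ℤ) + 1) ∈ beatty θ ↔ 1 - θ < Int.fract (((m : ℝ) + 1) * θ) := by
  have hmθ : Irrational (((m : ℝ) + 1) * θ) := irr_mul_succ hirr m
  have hfr : Int.fract (((m : ℝ) + 1) * θ) = ((m : ℝ) + 1) * θ - ⌊((m : ℝ) + 1) * θ⌋ := rfl
  constructor
  · rintro ⟨n, hn, hfl⟩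
    have hfl' : ⌊(n : ℝ) / θ⌋ = (m : ℤ) + 1 := hfl.symm
    have h2 : ((m : ℝ) + 1) ≤ (n : ℝ) / θ := by
      have := Int.floor_le ((n : ℝ) / θ)
      rw [hfl'] at this; push_cast at this; linarith
    have h3 : (n : ℝ) / θ < ((m : ℝ) + 1) + 1 := by
      have := Int.lt_floor_add_one ((n : ℝ) / θ)
      rw [hfl'] at this; push_cast at this; linarith
    have h4 : ((m : ℝ) + 1) * θ ≤ n := by rw [le_div_iff₀ h0] at h2; linarith
    have h5 : (n : ℝ) < ((m : ℝ) + 2) * θ := by rw [div_lt_iff₀ h0] at h3; nlinarith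
    have h6 : (⌊((m : ℝ) + 1) * θ⌋ : ℝ) ≤ (n : ℝ) - 1 := by
      have h7 : ((m : ℝ) + 1) * θ ≠ n := fun h => hmθ.ne_int n (by exact_mod_cast h)
      have h8 : ⌊((m : ℝ) + 1) * θ⌋ < (n : ℤ) := Int.floor_lt.2 (by
        exact_mod_cast lt_of_le_of_ne h4 h7)
      have : ⌊((m : ℝ) + 1) * θ⌋ ≤ (n : ℤ) - 1 := by omega
      exact_mod_cast this
    rw [hfr]; nlinarith
  · intro h
    set n : ℤ := ⌊((m : ℝ) + 1) * θ⌋ + 1 with hn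
    have hfl0 : (0 : ℤ) ≤ ⌊((m : ℝ) + 1) * θ⌋ := Int.floor_nonneg.2 (by positivity)
    have hn0 : 1 ≤ n := by rw [hn]; linarith
    have hnt : 0 < n.toNat := by omega
    have h4 : ((m : ℝ) + 1) * θ < (n : ℝ) := by
      have := Int.lt_floor_add_one (((m : ℝ) + 1) * θ); push_cast [hn]; linarith
    have h5 : (n : ℝ) < ((m : ℝ) + 2) * θ := by
      rw [hfr] at h
      push_cast [hn]
      nlinarith
    refine ⟨n.toNat, hnt, ?_⟩
    have hc : ((n.toNat : ℕ) : ℝ) = (n : ℝ) := by exact_mod_cast Int.toNat_of_nonneg (by omega)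
    rw [hc]
    symm
    apply Int.floor_eq_iff.2
    constructor
    · push_cast
      rw [le_div_iff₀ h0]
      push_cast
      linarith
    · push_cast
      rw [div_lt_iff₀ h0]
      push_cast
      linarith

lemma beatty_not_consec {α : ℝ} (ha : 0 < α) (ha2 : α < 1 / 2) {x : ℤ}
    (h1 : x ∈ beatty α) (h2 : x + 1 ∈ beatty α) : False := by
  obtain ⟨p, hp, hpx⟩ := h1
  obtain ⟨q, hq, hqx⟩ := h2
  rcases lt_trichotomy p q with h | h | h
  · have := gap_ge ha h 2 (by push_cast; linarith)
    omega
  · subst h; rw [← hpx] at hqx; omega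
  · have := gap_ge ha h 1 (by push_cast; linarith)
    omega

lemma btil_bounds {β : ℝ} (hb : 0 < β) (hb2 : β < 1 / 2) (α : ℝ) {n : ℕ} (hn : 0 < n) :
    ⌊(n : ℝ) / β⌋ - 1 ≤ btil α β n ∧ btil α β n ≤ ⌊(n : ℝ) / β⌋ ∧ 2 ≤ ⌊(n : ℝ) / β⌋ := by
  have h2 : (2 : ℤ) ≤ ⌊(n : ℝ) / β⌋ := by
    apply Int.le_floor.2
    rw [le_div_iff₀ hb]
    have : (1 : ℝ) ≤ n := by exact_mod_cast hn
    push_cast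
    linarith
  unfold btil
  split <;> omega

lemma count_btil {α β : ℝ} (hirra : Irrational α) (hirrb : Irrational β)
    (ha : 0 < α) (hb : 0 < β) (ha2 : α < 1 / 2) (hb2 : β < 1 / 2)
    (m : ℕ) (hm : 0 < m) :
    (countLe {x : ℤ | ∃ n : ℕ, 0 < n ∧ x = btil α β n} (m : ℤ) : ℤ)
      = ⌊((m : ℝ) + 1) * β⌋ +
        (if ((m : ℤ) + 1) ∈ beatty α ∧ 1 - β < Int.fract (((m : ℝ) + 1) * β)
          then 1 else 0) := by
  have hmβ : Irrational (((m : ℝ) + 1) * β) := irr_mul_succ hirrb m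
  set M : ℤ := ⌊((m : ℝ) + 1) * β⌋ with hM
  have hM0 : 0 ≤ M := Int.floor_nonneg.2 (by positivity)
  set ε : ℕ := if ((m : ℤ) + 1) ∈ beatty α ∧ 1 - β < Int.fract (((m : ℝ) + 1) * β)
      then 1 else 0 with hε
  have hfr : Int.fract (((m : ℝ) + 1) * β) = ((m : ℝ) + 1) * β - (M : ℝ) := rfl
  -- basic facts
  have hMle : (M : ℝ) ≤ ((m : ℝ) + 1) * β := Int.floor_le _
  have hMne : (M : ℝ) ≠ ((m : ℝ) + 1) * β := fun h => hmβ.ne_int M h.symm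
  have hMlt : (M : ℝ) < ((m : ℝ) + 1) * β := lt_of_le_of_ne hMle hMne
  have key : (Finset.Icc (1 : ℤ) (m : ℤ)).filter
        (fun k => k ∈ {x : ℤ | ∃ n : ℕ, 0 < n ∧ x = btil α β n})
      = (Finset.Icc 1 (M.toNat + ε)).image (btil α β) := by
    ext k
    simp only [Finset.mem_filter, Finset.mem_image, Finset.mem_Icc, Set.mem_setOf_eq]
    constructor
    · rintro ⟨⟨hk1, hkm⟩, n, hn, rfl⟩
      refine ⟨n, ⟨hn, ?_⟩, rfl⟩
      obtain ⟨hb1, hb2', hb3⟩ := btil_bounds hb hb2 α hn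
      -- b n ≤ m + 1
      have hbn : ⌊(n : ℝ) / β⌋ ≤ (m : ℤ) + 1 := by omega
      by_cases hcase : ⌊(n : ℝ) / β⌋ ≤ (m : ℤ)
      · -- n ≤ M
        have h2 : (n : ℝ) / β < (m : ℝ) + 1 := by
          calc (n : ℝ) / β < ⌊(n : ℝ) / β⌋ + 1 := Int.lt_floor_add_one _
          _ ≤ (m : ℝ) + 1 := by
              have : (⌊(n : ℝ) / β⌋ : ℝ) ≤ (m : ℝ) := by exact_mod_cast hcase
              linarith
        have h3 : (n : ℝ) < ((m : ℝ) + 1) * β := by rw [div_lt_iff₀ hb] at h2; linarith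
        have h4 : (n : ℤ) ≤ M := Int.le_floor.2 (by exact_mod_cast h3.le)
        omega
      · -- b n = m + 1
        have heq : ⌊(n : ℝ) / β⌋ = (m : ℤ) + 1 := by omega
        -- then btil n = b n - 1 must hold with b n ∈ beatty α
        have hmem : ⌊(n : ℝ) / β⌋ ∈ beatty α := by
          by_contra hc
          unfold btil at hkm
          rw [if_neg hc] at hkm
          omega
        have hmem' : ((m : ℤ) + 1) ∈ beatty α := heq ▸ hmem
        -- n bounds
        have h2 : ((m : ℝ) + 1) ≤ (n : ℝ) / β := by
          have := Int.floor_le ((n : ℝ) / β); rw [heq] at this; push_cast at this; linarith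
        have h3 : (n : ℝ) / β < (m : ℝ) + 2 := by
          have := Int.lt_floor_add_one ((n : ℝ) / β); rw [heq] at this; push_cast at this
          linarith
        have h4 : ((m : ℝ) + 1) * β ≤ (n : ℝ) := by rw [le_div_iff₀ hb] at h2; linarith
        have h5 : (n : ℝ) < ((m : ℝ) + 1) * β + β := by
          rw [div_lt_iff₀ hb] at h3; nlinarith
        have h4' : ((m : ℝ) + 1) * β < (n : ℝ) :=
          lt_of_le_of_ne h4 (fun h => hmβ.ne_int n (by exact_mod_cast h))
        -- so M < n and n < M + 2, hence n = M + 1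
        have h6 : M < (n : ℤ) := Int.floor_lt.2 (by exact_mod_cast h4')
        have h7 : (n : ℤ) ≤ M + 1 := by
          have hfb : Int.fract (((m : ℝ) + 1) * β) < 1 := Int.fract_lt_one _
          rw [hfr] at hfb
          have hR : (n : ℝ) < (M : ℝ) + 2 := by linarith [h5]
          have : (n : ℤ) < M + 2 := by exact_mod_cast hR
          omega
        have h8 : (n : ℤ) = M + 1 := by omega
        -- the fract condition holds
        have h9 : 1 - β < Int.fract (((m : ℝ) + 1) * β) := by
          rw [hfr]
          have hnR : (n : ℝ) = (M : ℝ) + 1 := by exact_mod_cast h8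
          linarith [h5]
        have hε1 : ε = 1 := by rw [hε, if_pos ⟨hmem', h9⟩]
        omega
    · rintro ⟨n, ⟨hn1, hnM⟩, rfl⟩
      obtain ⟨hb1, hb2', hb3⟩ := btil_bounds hb hb2 α hn1
      refine ⟨⟨by omega, ?_⟩, n, hn1, rfl⟩
      by_cases hcase : (n : ℤ) ≤ M
      · -- btil n ≤ b n ≤ m
        have h5 : (n : ℝ) ≤ ((m : ℝ) + 1) * β := by exact_mod_cast Int.le_floor.1 hcase
        have h7 : (n : ℝ) < ((m : ℝ) + 1) * β :=
          lt_of_le_of_ne h5 (fun h => hmβ.ne_int n (by exact_mod_cast h.symm))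
        have h8 : (n : ℝ) / β < (m : ℝ) + 1 := by rw [div_lt_iff₀ hb]; linarith
        have h9 : ⌊(n : ℝ) / β⌋ < (m : ℤ) + 1 := Int.floor_lt.2 (by exact_mod_cast h8)
        omega
      · -- n = M + 1, ε = 1
        have hε01 : ε = 0 ∨ ε = 1 := by rw [hε]; split <;> simp
        have hε1 : ε = 1 := by rcases hε01 with h0 | h1
                               · rw [h0] at hnM; omega
                               · exact h1
        have hcond : ((m : ℤ) + 1) ∈ beatty α ∧ 1 - β < Int.fract (((m : ℝ) + 1) * β) := by
          by_contra h; rw [hε, if_neg h] at hε1; omega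
        have h8 : (n : ℤ) = M + 1 := by omega
        -- show b n = m + 1
        have hnR : (n : ℝ) = (M : ℝ) + 1 := by exact_mod_cast h8
        have h4 : ((m : ℝ) + 1) * β < (n : ℝ) := by
          linarith [Int.lt_floor_add_one (((m : ℝ) + 1) * β)]
        have h5 : (n : ℝ) < ((m : ℝ) + 1) * β + β := by
          rw [hfr] at hcond
          linarith [hcond.2]
        have h6 : ⌊(n : ℝ) / β⌋ = (m : ℤ) + 1 := by
          apply Int.floor_eq_iff.2
          constructor
          · push_cast
            rw [le_div_iff₀ hb]
            push_cast
            linarith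
          · push_cast
            rw [div_lt_iff₀ hb]
            push_cast
            nlinarith
        have : btil α β n = (m : ℤ) := by
          unfold btil
          rw [h6, if_pos hcond.1]
          ring
        omega
  have hinj : Set.InjOn (btil α β) ↑(Finset.Icc 1 (M.toNat + ε)) := by
    intro a ha' b hb' hab
    simp only [Finset.coe_Icc, Set.mem_Icc] at ha' hb'
    by_contra hne
    have key2 : ∀ p q : ℕ, 0 < p → p < q → btil α β p < btil α β q := by
      intro p q hp hpq
      obtain ⟨c1, c2, c3⟩ := btil_bounds hb hb2 α hp
      obtain ⟨d1, d2, d3⟩ := btil_bounds hb hb2 α (by omega : 0 < q)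
      have := gap_ge hb hpq 2 (by push_cast; linarith)
      omega
    rcases lt_or_gt_of_ne hne with h | h
    · have := key2 a b (by omega) h; omega
    · have := key2 b a (by omega) h; omega
  rw [countLe, key, Finset.card_image_of_injOn hinj, Nat.card_Icc]
  rw [hε]
  split <;> push_cast <;> omega

lemma count_partition {α : ℝ} {Btβ Btγ : Set ℤ}
    (hdisj : ∀ x : ℤ, x ∈ Btβ → x ∉ beatty α)
    (hBtγ : Btγ = {x : ℤ | 0 < x ∧ x ∉ beatty α ∧ x ∉ Btβ}) (m : ℕ) :
    countLe Btγ (m : ℤ) + countLe (beatty α) (m : ℤ) + countLe Btβ (m : ℤ) = m := by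
  classical
  unfold countLe
  set s := Finset.Icc (1 : ℤ) (m : ℤ) with hs
  have hC : s.filter (fun k => k ∈ Btγ) = s.filter (fun k => ¬(k ∈ beatty α ∨ k ∈ Btβ)) := by
    apply Finset.filter_congr
    intro k hk
    simp only [Finset.mem_Icc, hs] at hk
    rw [hBtγ]
    simp only [Set.mem_setOf_eq]
    constructor
    · rintro ⟨_, h1, h2⟩
      push_neg
      exact ⟨h1, h2⟩
    · intro h
      push_neg at h
      exact ⟨by omega, h.1, h.2⟩
  have hor : s.filter (fun k => k ∈ beatty α ∨ k ∈ Btβ)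
      = s.filter (fun k => k ∈ beatty α) ∪ s.filter (fun k => k ∈ Btβ) :=
    Finset.filter_or _ _ _
  have hd : Disjoint (s.filter (fun k => k ∈ beatty α)) (s.filter (fun k => k ∈ Btβ)) := by
    rw [Finset.disjoint_left]
    intro a h1 h2
    simp only [Finset.mem_filter] at h1 h2
    exact hdisj a h2.2 h1.2
  have hsplit := Finset.card_filter_add_card_filter_not
    (s := s) (p := fun k => k ∈ beatty α ∨ k ∈ Btβ)
  rw [hor, Finset.card_union_of_disjoint hd] at hsplit
  have hcard : s.card = m := by
    rw [hs, Int.card_Icc]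
    omega
  rw [hC]
  omega

theorem Egamma_formula (α β γ : ℝ)
    (hirra : Irrational α) (hirrb : Irrational β) (hirrc : Irrational γ)
    (ha : 0 < α) (hb : 0 < β) (hc : 0 < γ) (hsum : α + β + γ = 1)
    (ha2 : α < 1 / 2) (hb2 : β < 1 / 2)
    (Btβ : Set ℤ) (hBtβ : Btβ = {x : ℤ | ∃ n : ℕ, 0 < n ∧ x = btil α β n})
    (Btγ : Set ℤ) (hBtγ : Btγ = {x : ℤ | 0 < x ∧ x ∉ beatty α ∧ x ∉ Btβ})
    (m : ℕ) (hm : 0 < m) :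
    (countLe Btγ (m : ℤ) : ℤ) - countLe (beatty γ) (m : ℤ) =
      if 1 < Int.fract (((m : ℝ) + 1) * α) + Int.fract (((m : ℝ) + 1) * β) ∧
          (Int.fract (((m : ℝ) + 1) * α) < 1 - α ∨ Int.fract (((m : ℝ) + 1) * β) < 1 - β)
      then 1 else 0 := by
  have hγ1 : γ < 1 := by linarith
  have hα1 : α < 1 := by linarith
  have hβ1 : β < 1 := by linarith
  -- disjointness of Btβ from beatty α
  have hdisj : ∀ x : ℤ, x ∈ Btβ → x ∉ beatty α := by
    intro x hx hmem
    rw [hBtβ] at hx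
    obtain ⟨n, hn, rfl⟩ := hx
    by_cases hcase : ⌊(n : ℝ) / β⌋ ∈ beatty α
    · have hx1 : btil α β n = ⌊(n : ℝ) / β⌋ - 1 := by unfold btil; rw [if_pos hcase]
      rw [hx1] at hmem
      exact beatty_not_consec ha ha2 hmem (by
        have : ⌊(n : ℝ) / β⌋ - 1 + 1 = ⌊(n : ℝ) / β⌋ := by ring
        rw [this]; exact hcase)
    · have hx1 : btil α β n = ⌊(n : ℝ) / β⌋ := by unfold btil; rw [if_neg hcase]
      rw [hx1] at hmem
      exact hcase hmem
  -- counting formulas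
  have hcα := count_beatty hirra ha hα1 m
  have hcγ := count_beatty hirrc hc hγ1 m
  have hcβ : (countLe Btβ (m : ℤ) : ℤ)
      = ⌊((m : ℝ) + 1) * β⌋ +
        (if ((m : ℤ) + 1) ∈ beatty α ∧ 1 - β < Int.fract (((m : ℝ) + 1) * β)
          then 1 else 0) := by
    rw [hBtβ]; exact count_btil hirra hirrb ha hb ha2 hb2 m hm
  have hpart := count_partition hdisj hBtγ m
  -- notation
  set u := Int.fract (((m : ℝ) + 1) * α) with hu
  set v := Int.fract (((m : ℝ) + 1) * β) with hv
  set w := Int.fract (((m : ℝ) + 1) * γ) with hw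
  set A : ℤ := ⌊((m : ℝ) + 1) * α⌋ with hA
  set B : ℤ := ⌊((m : ℝ) + 1) * β⌋ with hB
  set C : ℤ := ⌊((m : ℝ) + 1) * γ⌋ with hC
  have hud : u = ((m : ℝ) + 1) * α - A := rfl
  have hvd : v = ((m : ℝ) + 1) * β - B := rfl
  have hwd : w = ((m : ℝ) + 1) * γ - C := rfl
  have hu0 : 0 < u := fract_pos_of_irrational (irr_mul_succ hirra m)
  have hv0 : 0 < v := fract_pos_of_irrational (irr_mul_succ hirrb m)
  have hw0 : 0 < w := fract_pos_of_irrational (irr_mul_succ hirrc m)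
  have hu1 : u < 1 := Int.fract_lt_one _
  have hv1 : v < 1 := Int.fract_lt_one _
  have hw1 : w < 1 := Int.fract_lt_one _
  have hABC : (A : ℝ) + B + C = ((m : ℝ) + 1) - (u + v + w) := by
    have hsum2 : ((m : ℝ) + 1) * α + ((m : ℝ) + 1) * β + ((m : ℝ) + 1) * γ = (m : ℝ) + 1 := by
      have : ((m : ℝ) + 1) * (α + β + γ) = ((m : ℝ) + 1) * 1 := by rw [hsum]
      nlinarith [this]
    rw [hud, hvd, hwd] at *
    linarith
  have hint : A + B + C = (m : ℤ) - 1 ∨ A + B + C = m := by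
    have l2 : ((m : ℝ)) - 2 < (A : ℝ) + B + C := by linarith
    have u2 : ((A : ℝ) + B + C) < ((m : ℝ)) + 1 := by linarith
    have l3 : (m : ℤ) - 2 < A + B + C := by exact_mod_cast l2
    have u3 : A + B + C < (m : ℤ) + 1 := by exact_mod_cast u2
    omega
  -- u ≠ 1 - α, v ≠ 1 - β
  have hune : u ≠ 1 - α := by
    intro h
    have h2 : ((m : ℝ) + 2) * α = (A : ℝ) + 1 := by rw [hud] at h; linarith
    have h3 : Irrational ((((m : ℤ) + 2 : ℤ)) * α) := hirra.intCast_mul (by omega)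
    apply h3.ne_int (A + 1)
    push_cast
    push_cast at h2
    linarith
  have hvne : v ≠ 1 - β := by
    intro h
    have h2 : ((m : ℝ) + 2) * β = (B : ℝ) + 1 := by rw [hvd] at h; linarith
    have h3 : Irrational ((((m : ℤ) + 2 : ℤ)) * β) := hirrb.intCast_mul (by omega)
    apply h3.ne_int (B + 1)
    push_cast
    push_cast at h2
    linarith
  have hmemα := mem_beatty_succ hirra ha hα1 m
  -- the main case analysis
  have hLHS : (countLe Btγ (m : ℤ) : ℤ) - countLe (beatty γ) (m : ℤ)
      = (m : ℤ) - A - B - C -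
        (if ((m : ℤ) + 1) ∈ beatty α ∧ 1 - β < v then 1 else 0) := by
    have hp : (countLe Btγ (m : ℤ) : ℤ) + countLe (beatty α) (m : ℤ) + countLe Btβ (m : ℤ)
        = (m : ℤ) := by exact_mod_cast hpart
    rw [hcα] at hp
    rw [hcβ] at hp
    rw [hcγ]
    omega
  rcases lt_trichotomy (u + v) 1 with hcu | hcu | hcu
  · -- u + v < 1 : E = 0
    have he : ¬(((m : ℤ) + 1) ∈ beatty α ∧ 1 - β < v) := by
      rintro ⟨h1, h2⟩
      have h3 : 1 - α < u := hmemα.1 h1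
      linarith
    have hs1 : A + B + C = (m : ℤ) := by
      rcases hint with h | h
      · exfalso
        have : ((A : ℤ) : ℝ) + B + C = ((m : ℤ) : ℝ) - 1 := by exact_mod_cast h
        push_cast at this
        linarith
      · exact h
    rw [hLHS, if_neg he, if_neg (by rintro ⟨h1, _⟩; linarith)]
    omega
  · -- u + v = 1 : impossible
    exfalso
    have h2 : w = ((m : ℤ) - (A + B + C) : ℤ) := by push_cast; linarith
    have h3 : (0 : ℝ) < (((m : ℤ) - (A + B + C) : ℤ) : ℝ) := h2 ▸ hw0
    have h4 : (((m : ℤ) - (A + B + C) : ℤ) : ℝ) < 1 := h2 ▸ hw1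
    have h5 : (0 : ℤ) < (m : ℤ) - (A + B + C) := by exact_mod_cast h3
    have h6 : (m : ℤ) - (A + B + C) < 1 := by exact_mod_cast h4
    omega
  · -- u + v > 1
    have hs1 : A + B + C = (m : ℤ) - 1 := by
      rcases hint with h | h
      · exact h
      · exfalso
        have : ((A : ℤ) : ℝ) + B + C = ((m : ℤ) : ℝ) := by exact_mod_cast h
        push_cast at this
        linarith
    by_cases hc1 : ((m : ℤ) + 1) ∈ beatty α ∧ 1 - β < v
    · -- ε = 1, E = 0
      have h3 : 1 - α < u := hmemα.1 hc1.1
      rw [hLHS, if_pos hc1, if_neg (by rintro ⟨_, h4 | h4⟩ <;> linarith)]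
      omega
    · -- ε = 0, E = 1
      have hor : u < 1 - α ∨ v < 1 - β := by
        by_cases h1 : ((m : ℤ) + 1) ∈ beatty α
        · right
          have h2 : ¬(1 - β < v) := fun h => hc1 ⟨h1, h⟩
          push_neg at h2
          exact lt_of_le_of_ne h2 hvne
        · left
          have h2 : ¬(1 - α < u) := fun h => h1 (hmemα.2 h)
          push_neg at h2
          exact lt_of_le_of_ne h2 hune
      rw [hLHS, if_neg hc1, if_pos ⟨hcu, hor⟩]
      omega
end

section
/- Let α, γ be positive irrational numbers with 2α + γ = 1. Let B̃_β = {⌊n/α⌋ - 1 : n ≥ 1} and B̃_γ = ℕ \ (B_α ∪ B̃_β), with increasing enumeration (c̃(n)). Then for all positive integers n, c(n) - c̃(n) ∈ {0, 1}, where c(n) = ⌊n/γ⌋. -/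
open scoped Classical

lemma beatty_mem_iff {α : ℝ} (ha : 0 < α) (hirr : Irrational α)
    {m : ℤ} (hm : 1 ≤ m) :
    m ∈ beatty α ↔ ⌊(m : ℝ) * α⌋ < ⌊((m : ℝ) + 1) * α⌋ := by
  have hmirr : Irrational ((m : ℝ) * α) := by
    have := hirr.intCast_mul (show m ≠ 0 by omega)
    exact this
  have hirr2 : Irrational (((m : ℝ) + 1) * α) := by
    have h := hirr.intCast_mul (show m + 1 ≠ 0 by omega)
    push_cast at h
    convert h using 2
  constructor
  · rintro ⟨n, hn, hmn⟩
    have h1 : (m : ℝ) ≤ (n : ℝ) / α := by rw [hmn]; exact Int.floor_le _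
    have h2 : (n : ℝ) / α < (m : ℝ) + 1 := by rw [hmn]; exact Int.lt_floor_add_one _
    have h1' : (m : ℝ) * α ≤ (n : ℝ) := (le_div_iff₀ ha).mp h1
    have h2' : (n : ℝ) < ((m : ℝ) + 1) * α := (div_lt_iff₀ ha).mp h2
    have hne : (m : ℝ) * α ≠ (n : ℝ) := by
      have := hmirr.ne_int (n : ℤ)
      push_cast at this
      exact this
    have hlt : (m : ℝ) * α < (n : ℝ) := lt_of_le_of_ne h1' hne
    have hA : ⌊(m : ℝ) * α⌋ < (n : ℤ) := by
      rw [Int.floor_lt]; push_cast; exact hlt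
    have hB : (n : ℤ) ≤ ⌊((m : ℝ) + 1) * α⌋ := by
      rw [Int.le_floor]; push_cast; exact h2'.le
    omega
  · intro h
    set j := ⌊((m : ℝ) + 1) * α⌋ with hj
    have hj_le : (j : ℝ) ≤ ((m : ℝ) + 1) * α := Int.floor_le _
    have hj_lt : (j : ℝ) < ((m : ℝ) + 1) * α :=
      lt_of_le_of_ne hj_le (hirr2.ne_int j).symm
    have hmj : (m : ℝ) * α < j := by
      have h1 : (⌊(m : ℝ) * α⌋ : ℝ) + 1 ≤ (j : ℝ) := by
        exact_mod_cast (show ⌊(m : ℝ) * α⌋ + 1 ≤ j by omega)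
      have h2 := Int.lt_floor_add_one ((m : ℝ) * α)
      linarith
    have hm' : (1 : ℝ) ≤ (m : ℝ) := by exact_mod_cast hm
    have hjpos : 0 < j := by
      have : (0 : ℝ) < (j : ℝ) := lt_trans (by nlinarith) hmj
      exact_mod_cast this
    refine ⟨j.toNat, by omega, ?_⟩
    have hcast : ((j.toNat : ℕ) : ℝ) = (j : ℝ) := by
      exact_mod_cast Int.toNat_of_nonneg hjpos.le
    rw [hcast]
    symm
    rw [Int.floor_eq_iff]
    constructor
    · rw [le_div_iff₀ ha]; linarith
    · rw [div_lt_iff₀ ha]; push_cast; linarith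

lemma count_formula {α : ℝ} (ha : 0 < α) (ha2 : 2 * α < 1) (hirr : Irrational α)
    (Btβ : Set ℤ) (hBtβ : Btβ = {m : ℤ | ∃ n : ℕ, 0 < n ∧ m = ⌊(n : ℝ) / α⌋ - 1})
    (Btγ : Set ℤ) (hBtγ : Btγ = {m : ℤ | 0 < m ∧ m ∉ beatty α ∧ m ∉ Btβ}) :
    ∀ m : ℤ, 0 ≤ m →
      (countLe Btγ m : ℤ) = m - ⌊((m : ℝ) + 1) * α⌋ - ⌊((m : ℝ) + 2) * α⌋ := by
  have key : ∀ k : ℕ, (countLe Btγ (k : ℤ) : ℤ)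
      = (k : ℤ) - ⌊((k : ℝ) + 1) * α⌋ - ⌊((k : ℝ) + 2) * α⌋ := by
    intro k
    induction k with
    | zero =>
      have h1 : ⌊((0 : ℝ) + 1) * α⌋ = 0 := by
        rw [Int.floor_eq_zero_iff]
        constructor <;> [linarith; linarith]
      have h2 : ⌊((0 : ℝ) + 2) * α⌋ = 0 := by
        rw [Int.floor_eq_zero_iff]
        constructor <;> [linarith; linarith]
      have h3 : countLe Btγ 0 = 0 := by
        unfold countLe
        rw [Finset.Icc_eq_empty (by omega)]
        simp
      push_cast
      rw [h1, h2, h3]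
      ring
    | succ k ih =>
      set m : ℤ := (k : ℤ) with hmdef
      have hm : 0 ≤ m := Int.natCast_nonneg k
      have hcastR : ((k : ℕ) : ℝ) = ((m : ℤ) : ℝ) := by rw [hmdef]; push_cast; ring
      rw [hcastR] at ih
      set a := ⌊((m : ℝ) + 1) * α⌋ with hadef
      set b := ⌊((m : ℝ) + 2) * α⌋ with hbdef
      set c := ⌊((m : ℝ) + 3) * α⌋ with hcdef
      have hab : a ≤ b := Int.floor_le_floor (by nlinarith)
      have hbc : b ≤ c := Int.floor_le_floor (by nlinarith)
      have hf1 := Int.lt_floor_add_one (((m : ℝ) + 1) * α)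
      have hf2 := Int.lt_floor_add_one (((m : ℝ) + 2) * α)
      have hab1 : b ≤ a + 1 := by
        have : b < a + 2 := by
          rw [hbdef, Int.floor_lt]
          push_cast
          nlinarith
        omega
      have hbc1 : c ≤ b + 1 := by
        have : c < b + 2 := by
          rw [hcdef, Int.floor_lt]
          push_cast
          nlinarith
        omega
      have hnj : ¬(a < b ∧ b < c) := by
        rintro ⟨h1, h2⟩
        have h3 : c < a + 2 := by
          rw [hcdef, Int.floor_lt]
          push_cast
          nlinarith
        omega
      have hbeat1 : (m + 1 : ℤ) ∈ beatty α ↔ a < b := by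
        have h := beatty_mem_iff ha hirr (show (1 : ℤ) ≤ m + 1 by omega)
        rw [h]
        push_cast
        rw [show ((m : ℝ) + 1 + 1) = ((m : ℝ) + 2) by ring]
      have hbeat2 : (m + 2 : ℤ) ∈ beatty α ↔ b < c := by
        have h := beatty_mem_iff ha hirr (show (1 : ℤ) ≤ m + 2 by omega)
        rw [h]
        push_cast
        rw [show ((m : ℝ) + 2 + 1) = ((m : ℝ) + 3) by ring]
      have hbtb : (m + 1 : ℤ) ∈ Btβ ↔ (m + 2 : ℤ) ∈ beatty α := by
        rw [hBtβ]
        simp only [Set.mem_setOf_eq, beatty]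
        constructor
        · rintro ⟨j, hj, hje⟩; exact ⟨j, hj, by omega⟩
        · rintro ⟨j, hj, hje⟩; exact ⟨j, hj, by omega⟩
      have hmemiff : (m + 1 : ℤ) ∈ Btγ ↔ (a = b ∧ b = c) := by
        rw [hBtγ]
        simp only [Set.mem_setOf_eq]
        rw [hbeat1, hbtb, hbeat2]
        constructor
        · rintro ⟨_, h1, h2⟩; omega
        · rintro ⟨h1, h2⟩; exact ⟨by omega, by omega, by omega⟩
      have hIcc : Finset.Icc (1 : ℤ) (m + 1) = insert (m + 1) (Finset.Icc 1 m) := by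
        ext x
        simp only [Finset.mem_Icc, Finset.mem_insert]
        omega
      have hnotmem : (m + 1 : ℤ) ∉ Finset.Icc (1 : ℤ) m := by
        simp only [Finset.mem_Icc]; omega
      have hkey : (countLe Btγ (m + 1) : ℤ) =
          (countLe Btγ m : ℤ) + (if (m + 1 : ℤ) ∈ Btγ then 1 else 0) := by
        unfold countLe
        rw [hIcc, Finset.filter_insert]
        by_cases hP : (m + 1 : ℤ) ∈ Btγ
        · rw [if_pos hP,
            Finset.card_insert_of_notMem (fun hx => hnotmem (Finset.mem_filter.mp hx).1)]
          simp [hP]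
        · rw [if_neg hP]
          simp [hP]
      have hcastR2 : ((k + 1 : ℕ) : ℝ) = (m : ℝ) + 1 := by rw [hmdef]; push_cast; ring
      have hcastZ : ((k + 1 : ℕ) : ℤ) = m + 1 := by rw [hmdef]; push_cast; ring
      rw [hcastZ, hcastR2]
      rw [show ((m : ℝ) + 1 + 1) = ((m : ℝ) + 2) by ring,
        show ((m : ℝ) + 1 + 2) = ((m : ℝ) + 3) by ring]
      rw [hkey, ih]
      by_cases hP : (m + 1 : ℤ) ∈ Btγ
      · rw [if_pos hP]
        obtain ⟨h1, h2⟩ := hmemiff.mp hP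
        omega
      · rw [if_neg hP]
        have hne := (not_iff_not.mpr hmemiff).mp hP
        have : c = a + 1 := by
          by_cases h : a < b
          · have : ¬ b < c := fun h2 => hnj ⟨h, h2⟩
            omega
          · have : b < c := by
              rcases lt_or_eq_of_le hbc with h2 | h2
              · exact h2
              · exfalso; exact hne ⟨by omega, h2⟩
            omega
        omega
  intro m hm
  obtain ⟨k, rfl⟩ := Int.eq_ofNat_of_zero_le hm
  exact_mod_cast key k

theorem equal_density_gamma_error (α γ : ℝ)
    (hirra : Irrational α) (hirrc : Irrational γ)
    (ha : 0 < α) (hc : 0 < γ) (hsum : 2 * α + γ = 1)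
    (Btβ : Set ℤ) (hBtβ : Btβ = {m : ℤ | ∃ n : ℕ, 0 < n ∧ m = ⌊(n : ℝ) / α⌋ - 1})
    (Btγ : Set ℤ) (hBtγ : Btγ = {m : ℤ | 0 < m ∧ m ∉ beatty α ∧ m ∉ Btβ})
    (ct : ℕ → ℤ)
    (hmono : ∀ n m : ℕ, 0 < n → n < m → ct n < ct m)
    (hmem : ∀ n : ℕ, 0 < n → ct n ∈ Btγ)
    (hsurj : ∀ x ∈ Btγ, ∃ n : ℕ, 0 < n ∧ ct n = x) :
    ∀ n : ℕ, 0 < n → ⌊(n : ℝ) / γ⌋ - ct n ∈ ({0, 1} : Set ℤ) := by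
  intro n hn
  have ha2 : 2 * α < 1 := by linarith
  set m := ct n with hmdef
  have hmem' := hmem n hn
  rw [hBtγ] at hmem'
  obtain ⟨hm0, hmba, hmbb⟩ := hmem'
  -- Step A : countLe Btγ m = n
  have hcount : countLe Btγ m = n := by
    have himg : (Finset.Icc (1 : ℤ) m).filter (fun k => k ∈ Btγ)
        = (Finset.Icc 1 n).image ct := by
      ext x
      simp only [Finset.mem_filter, Finset.mem_Icc, Finset.mem_image]
      constructor
      · rintro ⟨⟨hx1, hx2⟩, hxS⟩
        obtain ⟨k, hk, rfl⟩ := hsurj x hxS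
        refine ⟨k, ⟨hk, ?_⟩, rfl⟩
        by_contra h
        push_neg at h
        exact absurd hx2 (not_le.mpr (hmono n k hn h))
      · rintro ⟨k, ⟨hk1, hk2⟩, rfl⟩
        have hkS := hmem k hk1
        have hk0 : 0 < ct k := by rw [hBtγ] at hkS; exact hkS.1
        have hkm : ct k ≤ m := by
          rcases lt_or_eq_of_le hk2 with h | h
          · exact (hmono k n hk1 h).le
          · subst h; omega
        exact ⟨⟨hk0, hkm⟩, hkS⟩
    unfold countLe
    rw [himg, Finset.card_image_of_injOn, Nat.card_Icc]
    · omega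
    · intro i hi j hj hij
      simp only [Finset.coe_Icc, Set.mem_Icc] at hi hj
      rcases lt_trichotomy i j with h | h | h
      · exact absurd hij (ne_of_lt (hmono i j hi.1 h))
      · exact h
      · exact absurd hij.symm (ne_of_lt (hmono j i hj.1 h))
  have hform := count_formula ha ha2 hirra Btβ hBtβ Btγ hBtγ m (by omega)
  -- the three floors coincide
  have hmono1 : ⌊(m : ℝ) * α⌋ ≤ ⌊((m : ℝ) + 1) * α⌋ := Int.floor_le_floor (by nlinarith)
  have hmono2 : ⌊((m : ℝ) + 1) * α⌋ ≤ ⌊((m : ℝ) + 2) * α⌋ := Int.floor_le_floor (by nlinarith)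
  have e1 : ⌊((m : ℝ) + 1) * α⌋ = ⌊(m : ℝ) * α⌋ := by
    have h := (beatty_mem_iff ha hirra (show (1 : ℤ) ≤ m by omega)).not.mp hmba
    omega
  have e2 : ⌊((m : ℝ) + 2) * α⌋ = ⌊((m : ℝ) + 1) * α⌋ := by
    have h' : (m + 1 : ℤ) ∉ beatty α := by
      intro hb
      apply hmbb
      rw [hBtβ]
      obtain ⟨k, hk, hke⟩ := hb
      exact ⟨k, hk, by omega⟩
    have h := (beatty_mem_iff ha hirra (show (1 : ℤ) ≤ m + 1 by omega)).not.mp h'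
    push_cast at h
    rw [show ((m : ℝ) + 1 + 1) = ((m : ℝ) + 2) by ring] at h
    omega
  set t := ⌊(m : ℝ) * α⌋ with htdef
  have hn_eq : (n : ℤ) = m - 2 * t := by omega
  -- fract facts
  have ht_le : (t : ℝ) ≤ (m : ℝ) * α := Int.floor_le _
  have hmirr : Irrational ((m : ℝ) * α) := hirra.intCast_mul (show m ≠ 0 by omega)
  have ht_lt : (t : ℝ) < (m : ℝ) * α := lt_of_le_of_ne ht_le (hmirr.ne_int t).symm
  have hfrac_lt : (m : ℝ) * α - t < γ := by
    have h := Int.lt_floor_add_one (((m : ℝ) + 2) * α)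
    rw [e2, e1] at h
    nlinarith
  have hreal : (n : ℝ) = (m : ℝ) - 2 * t := by exact_mod_cast hn_eq
  have hγ : γ = 1 - 2 * α := by linarith
  have hfloor_ge : (m : ℤ) ≤ ⌊(n : ℝ) / γ⌋ := by
    apply Int.le_floor.mpr
    rw [le_div_iff₀ hc, hreal]
    have key : (m : ℝ) * γ = (m : ℝ) - 2 * ((m : ℝ) * α) := by rw [hγ]; ring
    linarith
  have hfloor_lt : ⌊(n : ℝ) / γ⌋ < m + 2 := by
    apply Int.floor_lt.mpr
    push_cast
    rw [div_lt_iff₀ hc, hreal]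
    have key : ((m : ℝ) + 2) * γ = (m : ℝ) - 2 * ((m : ℝ) * α) + 2 * γ := by rw [hγ]; ring
    linarith
  simp only [Set.mem_insert_iff, Set.mem_singleton_iff]
  omega
end
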